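/- Let w(ξ,τ) solve the scalar evolution equation w_τ − ∂_ξ^{−1}w + i|∂_ξ^{−1}w|² w = 0, where ∂_ξ^{−1}w(ξ,τ) = −∫_ξ^∞ w(ξ',τ) dξ'. Define u(ξ,τ) = (1/2) w(ξ,τ) exp(−(i/2)∫_ξ^∞ |w(ξ',τ)|² dξ') and v(ξ,τ) = −(i/2) ∂_ξ^{−1}w(ξ,τ) exp(−(i/2)∫_ξ^∞ |w(ξ',τ)|² dξ'). Then (u,v) solves the massive Thirring model in characteristic coordinates: i u_τ + v = 2|v|² u and −i v_ξ + u = 2|u|² v. -/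

import Mathlib

open MeasureTheory Complex Set
open scoped Real ENNReal

noncomputable section

/-- The antiderivative `∂_ξ^{−1} w(ξ,τ) = −∫_ξ^∞ w(ξ',τ) dξ'`. -/
def antiDeriv (w : ℝ → ℝ → ℂ) (ξ τ : ℝ) : ℂ := -∫ s in Set.Ioi ξ, w s τ

/-- `w` is a (classical) solution of the scalar form
`w_τ − ∂_ξ^{−1}w + i|∂_ξ^{−1}w|² w = 0` of the massive Thirring model in characteristic
coordinates, with `w(⬝,τ)` integrable. -/
def SolvesScalarMTM (w : ℝ → ℝ → ℂ) : Prop :=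
  (∀ τ : ℝ, Integrable (fun ξ => w ξ τ) volume) ∧
  ∀ ξ τ : ℝ, HasDerivAt (fun s => w ξ s)
    (antiDeriv w ξ τ - Complex.I * ((‖antiDeriv w ξ τ‖ ^ 2 : ℝ) : ℂ) * w ξ τ) τ

/-- `u(ξ,τ) = (1/2) w e^{−(i/2)∫_ξ^∞|w|²}`. -/
def MTMu (w : ℝ → ℝ → ℂ) (ξ τ : ℝ) : ℂ :=
  (1 / 2 : ℂ) * w ξ τ *
    Complex.exp (-(Complex.I / 2) * ((∫ s in Set.Ioi ξ, (‖w s τ‖ ^ 2 : ℝ) : ℝ) : ℂ))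

/-- `v(ξ,τ) = −(i/2) (∂_ξ^{−1}w) e^{−(i/2)∫_ξ^∞|w|²}`. -/
def MTMv (w : ℝ → ℝ → ℂ) (ξ τ : ℝ) : ℂ :=
  -(Complex.I / 2) * antiDeriv w ξ τ *
    Complex.exp (-(Complex.I / 2) * ((∫ s in Set.Ioi ξ, (‖w s τ‖ ^ 2 : ℝ) : ℝ) : ℂ))

/- ### Auxiliary lemmas -/

section AuxLemmas

variable {E : Type*} [NormedAddCommGroup E] [NormedSpace ℝ E]

lemma MTM_key_Ioi {f : ℝ → E} (hf : Integrable f) (y : ℝ) :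
    ∫ t in Ioi y, f t = (∫ t in Ioi (0:ℝ), f t) - ∫ t in (0:ℝ)..y, f t := by
  have h1 := intervalIntegral.integral_Iic_add_Ioi (μ := volume) (b := y)
    hf.integrableOn hf.integrableOn
  have h2 := intervalIntegral.integral_Iic_add_Ioi (μ := volume) (b := (0:ℝ))
    hf.integrableOn hf.integrableOn
  have h3 := intervalIntegral.integral_Iic_sub_Iic (μ := volume) (f := f) (a := (0:ℝ)) (b := y)
      hf.integrableOn hf.integrableOn
  rw [← h3]
  have e1 : ∫ t in Ioi y, f t = (∫ t, f t) - ∫ t in Iic y, f t := by rw [← h1]; abel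
  have e2 : ∫ t in Ioi (0:ℝ), f t = (∫ t, f t) - ∫ t in Iic (0:ℝ), f t := by rw [← h2]; abel
  rw [e1, e2]; abel

lemma MTM_hasDerivAt_integral_Ioi {f : ℝ → E} [CompleteSpace E]
    (hf : Integrable f) (hc : Continuous f) (x : ℝ) :
    HasDerivAt (fun y => ∫ t in Ioi y, f t) (-f x) x := by
  have hfun : (fun y => ∫ t in Ioi y, f t)
      = fun y => (∫ t in Ioi (0:ℝ), f t) - ∫ t in (0:ℝ)..y, f t := funext (MTM_key_Ioi hf)
  rw [hfun]
  have h := intervalIntegral.integral_hasDerivAt_right (a := 0) (b := x)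
    hf.intervalIntegrable (hc.stronglyMeasurableAtFilter _ _) hc.continuousAt
  have h' := (hasDerivAt_const x (∫ t in Ioi (0:ℝ), f t)).sub h
  simp only [zero_sub] at h'
  exact h'

lemma MTM_tendsto_integral_Ioi_zero {f : ℝ → E} [CompleteSpace E] (hf : Integrable f) :
    Filter.Tendsto (fun y => ∫ t in Ioi y, f t) Filter.atTop (nhds 0) := by
  have hfun : (fun y => ∫ t in Ioi y, f t)
      = fun y => (∫ t in Ioi (0:ℝ), f t) - ∫ t in (0:ℝ)..y, f t := funext (MTM_key_Ioi hf)
  rw [hfun]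
  have h := intervalIntegral_tendsto_integral_Ioi (μ := volume) 0 hf.integrableOn
    Filter.tendsto_id
  simpa using (tendsto_const_nhds (x := ∫ t in Ioi (0:ℝ), f t)).sub h

lemma MTM_hasDerivAt_normSq {f : ℝ → ℂ} {f' : ℂ} {x : ℝ} (hf : HasDerivAt f f' x) :
    HasDerivAt (fun y => (‖f y‖ ^ 2 : ℝ)) (2 * ((starRingEnd ℂ) (f x) * f').re) x := by
  have h1 : HasDerivAt (fun y => star (f y) * f y)
      (star f' * f x + star (f x) * f') x := hf.star.mul hf
  have h2 : HasDerivAt (fun y => (star (f y) * f y).re)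
      ((star f' * f x + star (f x) * f').re) x :=
    Complex.reCLM.hasFDerivAt.comp_hasDerivAt x h1
  have h3 : (fun y => (star (f y) * f y).re) = fun y => (‖f y‖ ^ 2 : ℝ) := by
    funext y
    rw [Complex.star_def, mul_comm, Complex.mul_conj, Complex.ofReal_re,
      Complex.normSq_eq_norm_sq]
  rw [h3] at h2
  convert h2 using 1
  simp [Complex.star_def, Complex.mul_re, Complex.add_re, Complex.conj_re, Complex.conj_im]
  ring

end AuxLemmas

/-- If `w` solves the scalar equation `w_τ − ∂_ξ^{−1}w + i|∂_ξ^{−1}w|²w = 0`,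
then the pair `(u,v)` obtained through the substitutions above solves the massive Thirring
model in characteristic coordinates: `i u_τ + v = 2|v|²u` and `−i v_ξ + u = 2|u|²v`. -/
theorem MTM_substitution
    (w : ℝ → ℝ → ℂ)
    (hcont : Continuous (fun p : ℝ × ℝ => w p.1 p.2))
    (hw2 : ∀ τ : ℝ, Integrable (fun ξ => (‖w ξ τ‖ ^ 2 : ℝ)) volume)
    (hsol : SolvesScalarMTM w)
    (hInt : ∀ ξ τ : ℝ, HasDerivAt (fun s => ∫ ξ' in Set.Ioi ξ, (‖w ξ' s‖ ^ 2 : ℝ))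
      (∫ ξ' in Set.Ioi ξ, deriv (fun s' => (‖w ξ' s'‖ ^ 2 : ℝ)) τ) τ) :
    ∀ ξ τ : ℝ,
      Complex.I * deriv (fun s => MTMu w ξ s) τ + MTMv w ξ τ
        = 2 * ((‖MTMv w ξ τ‖ ^ 2 : ℝ) : ℂ) * MTMu w ξ τ ∧
      -Complex.I * deriv (fun y => MTMv w y τ) ξ + MTMu w ξ τ
        = 2 * ((‖MTMu w ξ τ‖ ^ 2 : ℝ) : ℂ) * MTMv w ξ τ := by
  obtain ⟨hwint, hweq⟩ := hsol
  intro ξ τ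
  -- basic continuity facts
  have hwc : ∀ t : ℝ, Continuous fun y => w y t := fun t =>
    hcont.comp (continuous_id.prodMk continuous_const)
  have hw2c : ∀ t : ℝ, Continuous fun y => (‖w y t‖ ^ 2 : ℝ) := fun t => (hwc t).norm.pow 2
  -- derivative of the antiderivative in ξ
  have hAd : ∀ t x : ℝ, HasDerivAt (fun y => antiDeriv w y t) (w x t) x := by
    intro t x
    have := (MTM_hasDerivAt_integral_Ioi (hwint t) (hwc t) x).neg
    simp only [neg_neg] at this
    exact this
  -- derivative of the phase integral in ξ
  have hPd : ∀ t x : ℝ, HasDerivAt (fun y => ∫ s in Ioi y, (‖w s t‖ ^ 2 : ℝ))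
      (-(‖w x t‖ ^ 2)) x := fun t x => MTM_hasDerivAt_integral_Ioi (hw2 t) (hw2c t) x
  -- decay of the antiderivative
  have hAt : ∀ t : ℝ, Filter.Tendsto (fun y => antiDeriv w y t) Filter.atTop (nhds 0) := by
    intro t
    have := (MTM_tendsto_integral_Ioi_zero (hwint t)).neg
    simp only [neg_zero] at this
    exact this
  have hAc : ∀ t : ℝ, Continuous fun y => antiDeriv w y t := fun t =>
    continuous_iff_continuousAt.2 fun x => (hAd t x).continuousAt
  -- uniform bound for the antiderivative
  have hM : ∀ t y : ℝ, ‖antiDeriv w y t‖ ≤ ∫ s, ‖w s t‖ := by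
    intro t y
    rw [antiDeriv, norm_neg]
    refine (norm_integral_le_integral_norm _).trans ?_
    exact setIntegral_le_integral (hwint t).norm
      (Filter.Eventually.of_forall fun s => norm_nonneg _)
  -- τ-derivative of the phase integral
  have hPt : HasDerivAt (fun s => ∫ s' in Ioi ξ, (‖w s' s‖ ^ 2 : ℝ))
      (-(‖antiDeriv w ξ τ‖ ^ 2)) τ := by
    have h := hInt ξ τ
    have heq : (∫ ξ' in Ioi ξ, deriv (fun s' => (‖w ξ' s'‖ ^ 2 : ℝ)) τ)
        = -(‖antiDeriv w ξ τ‖ ^ 2) := by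
      have hptw : ∀ ξ' : ℝ, deriv (fun s' => (‖w ξ' s'‖ ^ 2 : ℝ)) τ
          = 2 * ((starRingEnd ℂ) (antiDeriv w ξ' τ) * w ξ' τ).re := by
        intro ξ'
        rw [(MTM_hasDerivAt_normSq (hweq ξ' τ)).deriv]
        simp only [Complex.mul_re, Complex.sub_re, Complex.sub_im, Complex.mul_im,
          Complex.conj_re, Complex.conj_im, Complex.I_re, Complex.I_im,
          Complex.ofReal_re, Complex.ofReal_im]
        ring
      rw [integral_congr_ae (Filter.Eventually.of_forall hptw)]
      set M := ∫ s, ‖w s τ‖ with hMdef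
      have hMnn : 0 ≤ M := integral_nonneg fun s => norm_nonneg _
      have hint : IntegrableOn
          (fun y => 2 * ((starRingEnd ℂ) (antiDeriv w y τ) * w y τ).re) (Ioi ξ) := by
        have hint0 : Integrable (fun y => 2 * M * ‖w y τ‖) := (hwint τ).norm.const_mul (2 * M)
        refine (hint0.mono ?_ ?_).integrableOn
        · exact (continuous_const.mul (Complex.continuous_re.comp
            (((Complex.continuous_conj.comp (hAc τ)).mul (hwc τ))))).aestronglyMeasurable
        · refine Filter.Eventually.of_forall fun y => ?_
          have hb : |((starRingEnd ℂ) (antiDeriv w y τ) * w y τ).re| ≤ M * ‖w y τ‖ := by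
            refine (Complex.abs_re_le_norm _).trans ?_
            rw [norm_mul, Complex.norm_conj]
            calc ‖antiDeriv w y τ‖ * ‖w y τ‖
              _ ≤ M * ‖w y τ‖ := mul_le_mul_of_nonneg_right (hM τ y) (norm_nonneg _)
          have h2' : ‖2 * M * ‖w y τ‖‖ = 2 * (M * ‖w y τ‖) := by
            have h0 : (0:ℝ) ≤ 2 * M * ‖w y τ‖ :=
              mul_nonneg (mul_nonneg (by norm_num) hMnn) (norm_nonneg _)
            rw [Real.norm_eq_abs, _root_.abs_of_nonneg h0]; ring
          calc ‖2 * ((starRingEnd ℂ) (antiDeriv w y τ) * w y τ).re‖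
              = 2 * |((starRingEnd ℂ) (antiDeriv w y τ) * w y τ).re| := by
                rw [Real.norm_eq_abs, abs_mul]; norm_num
            _ ≤ 2 * (M * ‖w y τ‖) := by linarith
            _ = ‖2 * M * ‖w y τ‖‖ := h2'.symm
      have hder : ∀ x ∈ Ici ξ, HasDerivAt (fun y => (‖antiDeriv w y τ‖ ^ 2 : ℝ))
          (2 * ((starRingEnd ℂ) (antiDeriv w x τ) * w x τ).re) x :=
        fun x _ => MTM_hasDerivAt_normSq (hAd τ x)
      have htend : Filter.Tendsto (fun y => (‖antiDeriv w y τ‖ ^ 2 : ℝ))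
          Filter.atTop (nhds 0) := by
        have := ((hAt τ).norm).pow 2
        simpa using this
      rw [integral_Ioi_of_hasDerivAt_of_tendsto' hder hint htend]
      simp
    rw [heq] at h
    exact h
  -- norm of the exponential factor
  have hEnorm : ‖Complex.exp (-(Complex.I / 2) *
      ((∫ s in Set.Ioi ξ, (‖w s τ‖ ^ 2 : ℝ) : ℝ) : ℂ))‖ = 1 := by
    rw [Complex.norm_exp]
    have : (-(Complex.I / 2) * ((∫ s in Set.Ioi ξ, (‖w s τ‖ ^ 2 : ℝ) : ℝ) : ℂ)).re = 0 := by
      simp [Complex.div_re]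
    rw [this, Real.exp_zero]
  have hvnorm : (‖MTMv w ξ τ‖ ^ 2 : ℝ) = 1 / 4 * ‖antiDeriv w ξ τ‖ ^ 2 := by
    rw [MTMv, norm_mul, norm_mul, hEnorm, mul_one]
    have : ‖-(Complex.I / 2)‖ = 1 / 2 := by
      simp
    rw [this]; ring
  have hunorm : (‖MTMu w ξ τ‖ ^ 2 : ℝ) = 1 / 4 * ‖w ξ τ‖ ^ 2 := by
    rw [MTMu, norm_mul, norm_mul, hEnorm, mul_one]
    have : ‖(1 / 2 : ℂ)‖ = 1 / 2 := by
      simp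
    rw [this]; ring
  constructor
  · -- first equation
    have hexpT := ((hPt.ofReal_comp).const_mul (-(Complex.I / 2))).cexp
    have hud : HasDerivAt (fun s => MTMu w ξ s)
        ((1 / 2 : ℂ) * (antiDeriv w ξ τ - Complex.I * ((‖antiDeriv w ξ τ‖ ^ 2 : ℝ) : ℂ) * w ξ τ)
            * Complex.exp (-(Complex.I / 2) * ((∫ s in Set.Ioi ξ, (‖w s τ‖ ^ 2 : ℝ) : ℝ) : ℂ))
          + (1 / 2 : ℂ) * w ξ τ *
            (Complex.exp (-(Complex.I / 2) * ((∫ s in Set.Ioi ξ, (‖w s τ‖ ^ 2 : ℝ) : ℝ) : ℂ)) *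
              (-(Complex.I / 2) * ((-(‖antiDeriv w ξ τ‖ ^ 2) : ℝ) : ℂ)))) τ :=
      ((hweq ξ τ).const_mul (1 / 2 : ℂ)).mul hexpT
    rw [hud.deriv, hvnorm, MTMu, MTMv]
    push_cast
    linear_combination (-(((‖antiDeriv w ξ τ‖ : ℝ) : ℂ) ^ 2 * w ξ τ *
      Complex.exp (-(Complex.I / 2) * ((∫ s in Set.Ioi ξ, (‖w s τ‖ ^ 2 : ℝ) : ℝ) : ℂ))) / 4) *
      Complex.I_sq
  · -- second equation
    have hexpX := (((hPd τ ξ).ofReal_comp).const_mul (-(Complex.I / 2))).cexp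
    have hvd : HasDerivAt (fun y => MTMv w y τ)
        (-(Complex.I / 2) * w ξ τ
            * Complex.exp (-(Complex.I / 2) * ((∫ s in Set.Ioi ξ, (‖w s τ‖ ^ 2 : ℝ) : ℝ) : ℂ))
          + -(Complex.I / 2) * antiDeriv w ξ τ *
            (Complex.exp (-(Complex.I / 2) * ((∫ s in Set.Ioi ξ, (‖w s τ‖ ^ 2 : ℝ) : ℝ) : ℂ)) *
              (-(Complex.I / 2) * ((-(‖w ξ τ‖ ^ 2) : ℝ) : ℂ)))) ξ :=
      ((hAd τ ξ).const_mul (-(Complex.I / 2))).mul hexpX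
    rw [hvd.deriv, hunorm, MTMu, MTMv]
    push_cast
    linear_combination (w ξ τ *
        Complex.exp (-(Complex.I / 2) * ((∫ s in Set.Ioi ξ, (‖w s τ‖ ^ 2 : ℝ) : ℝ) : ℂ)) / 2
      + Complex.I * antiDeriv w ξ τ * ((‖w ξ τ‖ : ℝ) : ℂ) ^ 2 *
        Complex.exp (-(Complex.I / 2) * ((∫ s in Set.Ioi ξ, (‖w s τ‖ ^ 2 : ℝ) : ℝ) : ℂ)) / 4) *
      Complex.I_sq
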